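/- Fix constants beta >= 0, c_lam > 0, beta_bar_S > 0, beta_bar_I >= 0, beta_bar_R > 0, c_Inf, c_I, gamma, eta >= 0, and lam_bar in R^3; fix pi, y in R^3 with pi_S > 0. Let H_tilde(alpha_t, lam_S, lam_I, lam_R) := (y_I - y_S) * beta * lam_I * alpha_t * pi_I * pi_S + (y_R - y_I) * gamma + (y_S - y_R) * eta + c_Inf * pi_I^2 + (beta_bar_S/2)(lam_S - lam_bar_S)^2 + (beta_bar_I/2)(lam_I - lam_bar_I)^2 + (beta_bar_R/2)(lam_R - lam_bar_R)^2 + (c_lam/2)(lam_S - alpha_t)^2 * pi_S + c_I * pi_I. Then at any critical point (alpha_t, lam_S, lam_I, lam_R) of H_tilde the following explicit relations hold: (i) lam_R = lam_bar_R; (ii) alpha_t = lam_S + (beta * lam_I * pi_I / c_lam) * (y_S - y_I); (iii) lam_S = lam_bar_S + (beta / beta_bar_S) * lam_I * (y_S - y_I) * pi_I * pi_S; (iv) beta_bar_I * (lam_I - lam_bar_I) = - beta * alpha_t * (y_I - y_S) * pi_I * pi_S. -/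

import Mathlib

private lemma quad_hasDerivAt (a b c x : ℝ) :
    HasDerivAt (fun t : ℝ => a * t ^ 2 + b * t + c) (2 * a * x + b) x := by
  have h : HasDerivAt (fun t : ℝ => a * t ^ 2 + b * t + c) (a * (((2 : ℕ) : ℝ) * x ^ (2 - 1)) + b * 1) x :=
    (((hasDerivAt_pow 2 x).const_mul a).add ((hasDerivAt_id x).const_mul b)).add_const c
  convert h using 1
  push_cast
  ring


/-- at any critical point `(alpha_t, lam_S, lam_I, lam_R)` of the
principal's Hamiltonian `H_tilde` in the semi-explicitly solvable SIR
Stackelberg game (i.e. a point where all four partial derivatives vanish),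
the explicit relations (i)–(iv) hold:
(i) `lam_R = lbar_R`;
(ii) `alpha_t = lam_S + (β lam_I π_I / c_lam)(y_S - y_I)`;
(iii) `lam_S = lbar_S + (β / bbar_S) lam_I (y_S - y_I) π_I π_S`;
(iv) `bbar_I (lam_I - lbar_I) = - β alpha_t (y_I - y_S) π_I π_S`. -/
theorem sir_stackelberg_critical_point_relations
    (beta c_lam bbar_S bbar_I bbar_R c_Inf c_I gamma eta : ℝ)
    (hbeta : 0 ≤ beta) (hclam : 0 < c_lam)
    (hbS : 0 < bbar_S) (hbI : 0 ≤ bbar_I) (hbR : 0 < bbar_R)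
    (hcInf : 0 ≤ c_Inf) (hcI : 0 ≤ c_I) (hgamma : 0 ≤ gamma) (heta : 0 ≤ eta)
    (lbar_S lbar_I lbar_R : ℝ)
    (pi_S pi_I pi_R y_S y_I y_R : ℝ) (hpiS : 0 < pi_S)
    (H : ℝ → ℝ → ℝ → ℝ → ℝ)
    (hH : ∀ alpha lam_S lam_I lam_R : ℝ,
      H alpha lam_S lam_I lam_R
        = (y_I - y_S) * beta * lam_I * alpha * pi_I * pi_S
          + (y_R - y_I) * gamma + (y_S - y_R) * eta + c_Inf * pi_I ^ 2
          + (bbar_S / 2) * (lam_S - lbar_S) ^ 2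
          + (bbar_I / 2) * (lam_I - lbar_I) ^ 2
          + (bbar_R / 2) * (lam_R - lbar_R) ^ 2
          + (c_lam / 2) * (lam_S - alpha) ^ 2 * pi_S + c_I * pi_I)
    (alpha_t lam_S lam_I lam_R : ℝ)
    (hcrit1 : HasDerivAt (fun t => H t lam_S lam_I lam_R) 0 alpha_t)
    (hcrit2 : HasDerivAt (fun t => H alpha_t t lam_I lam_R) 0 lam_S)
    (hcrit3 : HasDerivAt (fun t => H alpha_t lam_S t lam_R) 0 lam_I)
    (hcrit4 : HasDerivAt (fun t => H alpha_t lam_S lam_I t) 0 lam_R) :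
    lam_R = lbar_R ∧
    alpha_t = lam_S + (beta * lam_I * pi_I / c_lam) * (y_S - y_I) ∧
    lam_S = lbar_S + (beta / bbar_S) * lam_I * (y_S - y_I) * pi_I * pi_S ∧
    bbar_I * (lam_I - lbar_I) = - (beta * alpha_t * (y_I - y_S) * pi_I * pi_S) := by
  -- rewrite each partial derivative hypothesis as a quadratic
  have h1 : HasDerivAt
      (fun t : ℝ => (c_lam / 2 * pi_S) * t ^ 2
        + ((y_I - y_S) * beta * lam_I * pi_I * pi_S - c_lam * lam_S * pi_S) * t
        + ((y_R - y_I) * gamma + (y_S - y_R) * eta + c_Inf * pi_I ^ 2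
          + (bbar_S / 2) * (lam_S - lbar_S) ^ 2 + (bbar_I / 2) * (lam_I - lbar_I) ^ 2
          + (bbar_R / 2) * (lam_R - lbar_R) ^ 2 + (c_lam / 2) * lam_S ^ 2 * pi_S + c_I * pi_I))
      0 alpha_t := by
    have hf : (fun t => H t lam_S lam_I lam_R) = _ := funext fun t => hH t lam_S lam_I lam_R
    rw [hf] at hcrit1
    convert hcrit1 using 1
    ext t; ring
  have e1 := h1.unique (quad_hasDerivAt _ _ _ alpha_t)
  have h2 : HasDerivAt
      (fun t : ℝ => (bbar_S / 2 + c_lam / 2 * pi_S) * t ^ 2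
        + (-(bbar_S * lbar_S) - c_lam * alpha_t * pi_S) * t
        + ((y_I - y_S) * beta * lam_I * alpha_t * pi_I * pi_S
          + (y_R - y_I) * gamma + (y_S - y_R) * eta + c_Inf * pi_I ^ 2
          + (bbar_S / 2) * lbar_S ^ 2 + (bbar_I / 2) * (lam_I - lbar_I) ^ 2
          + (bbar_R / 2) * (lam_R - lbar_R) ^ 2 + (c_lam / 2) * alpha_t ^ 2 * pi_S + c_I * pi_I))
      0 lam_S := by
    have hf : (fun t => H alpha_t t lam_I lam_R) = _ := funext fun t => hH alpha_t t lam_I lam_R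
    rw [hf] at hcrit2
    convert hcrit2 using 1
    ext t; ring
  have e2 := h2.unique (quad_hasDerivAt _ _ _ lam_S)
  have h3 : HasDerivAt
      (fun t : ℝ => (bbar_I / 2) * t ^ 2
        + ((y_I - y_S) * beta * alpha_t * pi_I * pi_S - bbar_I * lbar_I) * t
        + ((y_R - y_I) * gamma + (y_S - y_R) * eta + c_Inf * pi_I ^ 2
          + (bbar_S / 2) * (lam_S - lbar_S) ^ 2 + (bbar_I / 2) * lbar_I ^ 2
          + (bbar_R / 2) * (lam_R - lbar_R) ^ 2
          + (c_lam / 2) * (lam_S - alpha_t) ^ 2 * pi_S + c_I * pi_I))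
      0 lam_I := by
    have hf : (fun t => H alpha_t lam_S t lam_R) = _ := funext fun t => hH alpha_t lam_S t lam_R
    rw [hf] at hcrit3
    convert hcrit3 using 1
    ext t; ring
  have e3 := h3.unique (quad_hasDerivAt _ _ _ lam_I)
  have h4 : HasDerivAt
      (fun t : ℝ => (bbar_R / 2) * t ^ 2 + (-(bbar_R * lbar_R)) * t
        + ((y_I - y_S) * beta * lam_I * alpha_t * pi_I * pi_S
          + (y_R - y_I) * gamma + (y_S - y_R) * eta + c_Inf * pi_I ^ 2
          + (bbar_S / 2) * (lam_S - lbar_S) ^ 2 + (bbar_I / 2) * (lam_I - lbar_I) ^ 2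
          + (bbar_R / 2) * lbar_R ^ 2
          + (c_lam / 2) * (lam_S - alpha_t) ^ 2 * pi_S + c_I * pi_I))
      0 lam_R := by
    have hf : (fun t => H alpha_t lam_S lam_I t) = _ := funext fun t => hH alpha_t lam_S lam_I t
    rw [hf] at hcrit4
    convert hcrit4 using 1
    ext t; ring
  have e4 := h4.unique (quad_hasDerivAt _ _ _ lam_R)
  -- e1 : 0 = 2 * (c_lam/2*pi_S) * alpha_t + ...
  have e1' : c_lam * alpha_t - c_lam * lam_S - beta * lam_I * pi_I * (y_S - y_I) = 0 := by
    have := mul_left_cancel₀ hpiS.ne'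
      (show pi_S * (c_lam * alpha_t - c_lam * lam_S - beta * lam_I * pi_I * (y_S - y_I))
          = pi_S * 0 by linear_combination -e1)
    simpa using this
  have e4' : bbar_R * (lam_R - lbar_R) = 0 := by linear_combination -e4
  refine ⟨?_, ?_, ?_, ?_⟩
  · rcases mul_eq_zero.mp e4' with h | h
    · exact absurd h hbR.ne'
    · linarith
  · field_simp
    linear_combination e1'
  · have hiii : bbar_S * (lam_S - lbar_S) = beta * lam_I * (y_S - y_I) * pi_I * pi_S := by
      linear_combination -e2 + pi_S * e1'
    field_simp
    linear_combination hiii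
  · linear_combination -e3
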